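/- The subalgebra 𝒜 is a free module over the subalgebra ℬ with basis {(d₂₂*)^α·d₂₂^β : 0 ≤ α, β ≤ q−2}. -/

import Mathlib

open MvPolynomial

noncomputable section

abbrev R2 (F : Type) [Field F] : Type := MvPolynomial (Fin 4) F

/-- The action of `A ∈ GL₂(F)` on `R₂ = F[x₁,x₂,y₁,y₂]` (variables `X 0, X 1, X 2, X 3`). -/
def act {F : Type} [Field F] (A : GL (Fin 2) F) : R2 F →ₐ[F] R2 F :=
  aeval ![C ((A.val.det)⁻¹ * A.val 1 1) * X 0 - C ((A.val.det)⁻¹ * A.val 1 0) * X 1,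
          C ((A.val.det)⁻¹ * A.val 0 0) * X 1 - C ((A.val.det)⁻¹ * A.val 0 1) * X 0,
          C (A.val 0 0) * X 2 + C (A.val 0 1) * X 3,
          C (A.val 1 0) * X 2 + C (A.val 1 1) * X 3]

/-- The invariant ring `R₂^G` for a subgroup `G ≤ GL₂(F)`. -/
def invariantRing {F : Type} [Field F] (G : Subgroup (GL (Fin 2) F)) : Subalgebra F (R2 F) where
  carrier := {f | ∀ A ∈ G, act A f = f}
  mul_mem' := fun hf hg A hA => by rw [map_mul, hf A hA, hg A hA]
  add_mem' := fun hf hg A hA => by rw [map_add, hf A hA, hg A hA]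
  one_mem' := fun A _ => map_one (act A)
  zero_mem' := fun A _ => map_zero (act A)
  algebraMap_mem' := fun r A _ => (act A).commutes r

/-- `SL₂(F)` as a subgroup of `GL₂(F)`. -/
def SL2 (F : Type) [Field F] : Subgroup (GL (Fin 2) F) where
  carrier := {A | A.val.det = 1}
  one_mem' := by simp
  mul_mem' := by
    intro a b ha hb
    simp only [Set.mem_setOf_eq, Units.val_mul, Matrix.det_mul] at *
    rw [ha, hb, mul_one]
  inv_mem' := by
    intro a ha
    have h : ((a⁻¹).val * a.val).det = 1 := by
      rw [← Units.val_mul, inv_mul_cancel, Units.val_one, Matrix.det_one]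
    simp only [Matrix.det_mul] at h
    rw [Set.mem_setOf_eq] at ha ⊢
    rw [ha, mul_one] at h
    exact h

/-- `P₂(F)`: upper triangular matrices in `SL₂(F)` with 1's on the diagonal. -/
def P2 (F : Type) [Field F] : Subgroup (GL (Fin 2) F) where
  carrier := {A | A.val 0 0 = 1 ∧ A.val 1 1 = 1 ∧ A.val 1 0 = 0}
  one_mem' := by simp
  mul_mem' := by
    intro a b ha hb
    obtain ⟨ha1, ha2, ha3⟩ := ha
    obtain ⟨hb1, hb2, hb3⟩ := hb
    refine ⟨?_, ?_, ?_⟩ <;>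
      simp [Units.val_mul, Matrix.mul_apply, Fin.sum_univ_two, ha1, ha2, ha3, hb1, hb2, hb3]
  inv_mem' := by
    intro a ha
    obtain ⟨ha1, ha2, ha3⟩ := ha
    have hdet : a.val.det = 1 := by
      rw [Matrix.det_fin_two, ha1, ha2, ha3]; ring
    have hinv : (a⁻¹).val = a.val⁻¹ := by
      simp [Matrix.coe_units_inv]
    refine ⟨?_, ?_, ?_⟩ <;>
      simp [hinv, Matrix.inv_def, hdet, Matrix.adjugate_fin_two, ha1, ha2, ha3]

def d22 (F : Type) [Field F] (q : ℕ) : R2 F := X 1 * X 0 ^ q - X 0 * X 1 ^ q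
def d22s (F : Type) [Field F] (q : ℕ) : R2 F := X 2 * X 3 ^ q - X 3 * X 2 ^ q
def u0 (F : Type) [Field F] : R2 F := X 0 * X 2 + X 1 * X 3
def u1 (F : Type) [Field F] (q : ℕ) : R2 F := X 0 ^ q * X 2 + X 1 ^ q * X 3
def u1s (F : Type) [Field F] (q : ℕ) : R2 F := X 0 * X 2 ^ q + X 1 * X 3 ^ q
def phi1 (F : Type) [Field F] : R2 F := X 0
def phi2 (F : Type) [Field F] (q : ℕ) : R2 F := X 1 ^ q - X 1 * X 0 ^ (q - 1)
def phi1s (F : Type) [Field F] : R2 F := X 3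
def phi2s (F : Type) [Field F] (q : ℕ) : R2 F := X 2 ^ q - X 2 * X 3 ^ (q - 1)

namespace Stmt14

variable {F : Type} [Field F]

abbrev sd (p : MvPolynomial (Fin 4) F) : Lex (Fin 4 →₀ ℕ) := AddMonoidAlgebra.supDegree toLex p
abbrev lc (p : MvPolynomial (Fin 4) F) : F := AddMonoidAlgebra.leadingCoeff toLex p

lemma lc_mul (p q : MvPolynomial (Fin 4) F) : lc (p*q) = lc p * lc q :=
  AddMonoidAlgebra.leadingCoeff_mul toLex.injective (fun _ _ => toLex_add _ _)

lemma lc_ne_zero {p : MvPolynomial (Fin 4) F} (h : p ≠ 0) : lc p ≠ 0 := by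
  rwa [Ne, AddMonoidAlgebra.leadingCoeff_eq_zero toLex.injective]

lemma ne_zero_of_lc {p : MvPolynomial (Fin 4) F} {a : F} (h : lc p = a) (ha : a ≠ 0) :
    p ≠ 0 := by
  rintro rfl
  exact ha (h.symm.trans (AddMonoidAlgebra.leadingCoeff_zero))

lemma sd_mul {p q : MvPolynomial (Fin 4) F} (hp : p ≠ 0) (hq : q ≠ 0) :
    sd (p*q) = sd p + sd q :=
  AddMonoidAlgebra.supDegree_mul toLex.injective (fun _ _ => toLex_add _ _)
    (by rw [← lc_mul]; exact lc_ne_zero (mul_ne_zero hp hq)) hp hq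

lemma sd_one : sd (1 : MvPolynomial (Fin 4) F) = 0 := by
  rw [show (1 : MvPolynomial (Fin 4) F) = C 1 from (map_one C).symm]
  exact supDegree_toLex_C 1

lemma lc_one : lc (1 : MvPolynomial (Fin 4) F) = 1 := by
  rw [show (1 : MvPolynomial (Fin 4) F) = C 1 from (map_one C).symm]
  exact leadingCoeff_toLex_C 1

lemma lc_pow (p : MvPolynomial (Fin 4) F) (n : ℕ) : lc (p^n) = lc p ^ n := by
  induction n with
  | zero => simpa using lc_one
  | succ n ih => rw [pow_succ, lc_mul, ih, pow_succ]

lemma sd_pow' {p : MvPolynomial (Fin 4) F} (hp : p ≠ 0) {v : Fin 4 →₀ ℕ}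
    (hv : sd p = toLex v) (n : ℕ) : sd (p^n) = toLex (n • v) := by
  induction n with
  | zero => simpa using sd_one
  | succ n ih =>
    rw [pow_succ, sd_mul (pow_ne_zero _ hp) hp, ih, hv, succ_nsmul, toLex_add]

lemma sd_binomial (u v : Fin 4 →₀ ℕ) (h : toLex v < toLex u) (a b : F) (ha : a ≠ 0) :
    sd (monomial u a + monomial v b) = toLex u ∧ lc (monomial u a + monomial v b) = a := by
  have h1 : sd (monomial u a : MvPolynomial (Fin 4) F) = toLex u := by
    rw [← single_eq_monomial]
    exact AddMonoidAlgebra.supDegree_single_ne_zero _ ha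
  have h2 : sd (monomial v b : MvPolynomial (Fin 4) F) < sd (monomial u a : MvPolynomial (Fin 4) F) := by
    rw [h1]
    have hle : sd (monomial v b : MvPolynomial (Fin 4) F) ≤ toLex v := by
      rcases eq_or_ne b 0 with rfl | hb
      · rw [monomial_zero]; exact bot_le
      · rw [← single_eq_monomial]
        exact le_of_eq (AddMonoidAlgebra.supDegree_single_ne_zero _ hb)
    exact hle.trans_lt h
  refine ⟨(AddMonoidAlgebra.supDegree_add_eq_left h2).trans h1, ?_⟩
  have h3 : lc (monomial u a : MvPolynomial (Fin 4) F) = a := by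
    rw [← single_eq_monomial]
    exact AddMonoidAlgebra.leadingCoeff_single toLex.injective _ _
  exact (AddMonoidAlgebra.leadingCoeff_add_eq_left h2).trans h3

lemma lex01 {m : ℕ} (hm : 2 ≤ m) :
    toLex (Finsupp.single (0 : Fin 4) 1 + Finsupp.single 1 m)
      < toLex (Finsupp.single (1 : Fin 4) 1 + Finsupp.single 0 m) := by
  rw [Finsupp.Lex.lt_iff]
  refine ⟨0, ⟨fun j hj => by simp at hj, ?_⟩⟩
  simp [Finsupp.single_apply]
  omega

lemma lex23 {m : ℕ} (hm : 2 ≤ m) :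
    toLex (Finsupp.single (2 : Fin 4) 1 + Finsupp.single 3 m)
      < toLex (Finsupp.single (3 : Fin 4) 1 + Finsupp.single 2 m) := by
  rw [Finsupp.Lex.lt_iff]
  refine ⟨2, ⟨fun j hj => ?_, ?_⟩⟩
  · fin_cases j <;> simp_all [Finsupp.single_apply] <;> omega
  · simp [Finsupp.single_apply]
    omega

lemma form1 {m : ℕ} (hm : 2 ≤ m) :
    sd (X 1 * X 0 ^ m - X 0 * X 1 ^ m : MvPolynomial (Fin 4) F)
        = toLex (Finsupp.single 1 1 + Finsupp.single 0 m) ∧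
      lc (X 1 * X 0 ^ m - X 0 * X 1 ^ m : MvPolynomial (Fin 4) F) = 1 := by
  have hform : (X 1 * X 0 ^ m - X 0 * X 1 ^ m : MvPolynomial (Fin 4) F)
      = monomial (Finsupp.single 1 1 + Finsupp.single 0 m) 1
        + monomial (Finsupp.single 0 1 + Finsupp.single 1 m) (-1) := by
    rw [sub_eq_add_neg]
    congr 1
    · rw [X_pow_eq_monomial, X, monomial_mul, one_mul]
    · rw [X_pow_eq_monomial, X, monomial_mul, one_mul, ← map_neg]
  rw [hform]
  exact sd_binomial _ _ (lex01 hm) _ _ one_ne_zero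

lemma form2 {m : ℕ} (hm : 2 ≤ m) :
    sd (X 2 * X 3 ^ m - X 3 * X 2 ^ m : MvPolynomial (Fin 4) F)
        = toLex (Finsupp.single 3 1 + Finsupp.single 2 m) ∧
      lc (X 2 * X 3 ^ m - X 3 * X 2 ^ m : MvPolynomial (Fin 4) F) = -1 := by
  have hform : (X 2 * X 3 ^ m - X 3 * X 2 ^ m : MvPolynomial (Fin 4) F)
      = monomial (Finsupp.single 3 1 + Finsupp.single 2 m) (-1)
        + monomial (Finsupp.single 2 1 + Finsupp.single 3 m) 1 := by
    rw [sub_eq_add_neg, add_comm]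
    congr 1
    · rw [X_pow_eq_monomial, X, monomial_mul, one_mul, ← map_neg]
    · rw [X_pow_eq_monomial, X, monomial_mul, one_mul]
  rw [hform]
  exact sd_binomial _ _ (lex23 hm) _ _ (neg_ne_zero.mpr one_ne_zero)



variable (q : ℕ)

lemma q_le_q2 (hq : 2 ≤ q) : q ≤ q^2 := Nat.le_self_pow two_ne_zero q
lemma q_lt_q2 (hq : 2 ≤ q) : q < q^2 := by
  calc q = q^1 := (pow_one q).symm
  _ < q^2 := Nat.pow_lt_pow_right (by omega) (by omega)
lemma q2_le (hq : 2 ≤ q) : 2 ≤ q^2 := hq.trans (q_le_q2 q hq)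
lemma q2_sub_pos (hq : 2 ≤ q) : 0 < q^2 - q := Nat.sub_pos_of_lt (q_lt_q2 q hq)

def E (b j a l : ℕ) : Fin 4 →₀ ℕ :=
  Finsupp.single 0 (b*q + j*(q^2-q)) + Finsupp.single 1 b
    + Finsupp.single 2 (a*q + l*(q^2-q)) + Finsupp.single 3 a

variable {q}

lemma sd_d22 (hq : 2 ≤ q) :
    sd (d22 F q) = toLex (Finsupp.single 1 1 + Finsupp.single 0 q) := (form1 hq).1
lemma lc_d22 (hq : 2 ≤ q) : lc (d22 F q) = 1 := (form1 hq).2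
lemma d22_ne (hq : 2 ≤ q) : d22 F q ≠ 0 := ne_zero_of_lc (lc_d22 hq) one_ne_zero
lemma sd_d22s (hq : 2 ≤ q) :
    sd (d22s F q) = toLex (Finsupp.single 3 1 + Finsupp.single 2 q) := (form2 hq).1
lemma lc_d22s (hq : 2 ≤ q) : lc (d22s F q) = -1 := (form2 hq).2
lemma d22s_ne (hq : 2 ≤ q) : d22s F q ≠ 0 :=
  ne_zero_of_lc (lc_d22s hq) (neg_ne_zero.mpr one_ne_zero)

lemma c21_facts (hq : 2 ≤ q) {c21 : MvPolynomial (Fin 4) F}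
    (hc21 : d22 F q * c21 = X 1 * X 0 ^ (q ^ 2) - X 0 * X 1 ^ (q ^ 2)) :
    c21 ≠ 0 ∧ sd c21 = toLex (Finsupp.single (0 : Fin 4) (q^2 - q)) ∧ lc c21 = 1 := by
  have hrne : (X 1 * X 0 ^ (q ^ 2) - X 0 * X 1 ^ (q ^ 2) : MvPolynomial (Fin 4) F) ≠ 0 :=
    ne_zero_of_lc (form1 (q2_le q hq)).2 one_ne_zero
  have hcne : c21 ≠ 0 := by
    rintro rfl
    rw [mul_zero] at hc21
    exact hrne hc21.symm
  have hsum := sd_mul (d22_ne hq) hcne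
  rw [hc21, (form1 (q2_le q hq)).1, sd_d22 hq] at hsum
  have key : toLex (Finsupp.single (1:Fin 4) 1 + Finsupp.single 0 (q^2))
      = toLex (Finsupp.single (1:Fin 4) 1 + Finsupp.single 0 q)
        + toLex (Finsupp.single (0:Fin 4) (q^2-q)) := by
    rw [← toLex_add]
    congr 1
    rw [add_assoc, ← Finsupp.single_add, Nat.add_sub_cancel' (q_le_q2 q hq)]
  refine ⟨hcne, ?_, ?_⟩
  · exact add_left_cancel (hsum.symm.trans key)
  · have hlc := lc_mul (d22 F q) c21
    rw [hc21, (form1 (q2_le q hq)).2, lc_d22 hq, one_mul] at hlc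
    exact hlc.symm

lemma c21s_facts (hq : 2 ≤ q) {c21s : MvPolynomial (Fin 4) F}
    (hc21s : d22s F q * c21s = X 2 * X 3 ^ (q ^ 2) - X 3 * X 2 ^ (q ^ 2)) :
    c21s ≠ 0 ∧ sd c21s = toLex (Finsupp.single (2 : Fin 4) (q^2 - q)) ∧ lc c21s = 1 := by
  have hrne : (X 2 * X 3 ^ (q ^ 2) - X 3 * X 2 ^ (q ^ 2) : MvPolynomial (Fin 4) F) ≠ 0 :=
    ne_zero_of_lc (form2 (q2_le q hq)).2 (neg_ne_zero.mpr one_ne_zero)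
  have hcne : c21s ≠ 0 := by
    rintro rfl
    rw [mul_zero] at hc21s
    exact hrne hc21s.symm
  have hsum := sd_mul (d22s_ne hq) hcne
  rw [hc21s, (form2 (q2_le q hq)).1, sd_d22s hq] at hsum
  have key : toLex (Finsupp.single (3:Fin 4) 1 + Finsupp.single 2 (q^2))
      = toLex (Finsupp.single (3:Fin 4) 1 + Finsupp.single 2 q)
        + toLex (Finsupp.single (2:Fin 4) (q^2-q)) := by
    rw [← toLex_add]
    congr 1
    rw [add_assoc, ← Finsupp.single_add, Nat.add_sub_cancel' (q_le_q2 q hq)]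
  refine ⟨hcne, ?_, ?_⟩
  · exact add_left_cancel (hsum.symm.trans key)
  · have hlc := lc_mul (d22s F q) c21s
    rw [hc21s, (form2 (q2_le q hq)).2, lc_d22s hq] at hlc
    rw [neg_one_mul] at hlc
    exact neg_inj.mp hlc.symm

lemma sdP (hq : 2 ≤ q) {c21 c21s : MvPolynomial (Fin 4) F}
    (hc21 : d22 F q * c21 = X 1 * X 0 ^ (q ^ 2) - X 0 * X 1 ^ (q ^ 2))
    (hc21s : d22s F q * c21s = X 2 * X 3 ^ (q ^ 2) - X 3 * X 2 ^ (q ^ 2))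
    (b j a l : ℕ) :
    d22 F q ^ b * c21 ^ j * d22s F q ^ a * c21s ^ l ≠ 0 ∧
      sd (d22 F q ^ b * c21 ^ j * d22s F q ^ a * c21s ^ l) = toLex (E q b j a l) := by
  obtain ⟨hc, hsc, _⟩ := c21_facts hq hc21
  obtain ⟨hcs, hscs, _⟩ := c21s_facts hq hc21s
  have h1 : d22 F q ^ b * c21 ^ j ≠ 0 :=
    mul_ne_zero (pow_ne_zero _ (d22_ne hq)) (pow_ne_zero _ hc)
  have h2 : d22 F q ^ b * c21 ^ j * d22s F q ^ a ≠ 0 :=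
    mul_ne_zero h1 (pow_ne_zero _ (d22s_ne hq))
  have h3 : d22 F q ^ b * c21 ^ j * d22s F q ^ a * c21s ^ l ≠ 0 :=
    mul_ne_zero h2 (pow_ne_zero _ hcs)
  refine ⟨h3, ?_⟩
  rw [sd_mul h2 (pow_ne_zero _ hcs), sd_mul h1 (pow_ne_zero _ (d22s_ne hq)),
    sd_mul (pow_ne_zero _ (d22_ne hq)) (pow_ne_zero _ hc),
    sd_pow' (d22_ne hq) (sd_d22 hq) b, sd_pow' hc hsc j,
    sd_pow' (d22s_ne hq) (sd_d22s hq) a, sd_pow' hcs hscs l,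
    ← toLex_add, ← toLex_add, ← toLex_add]
  congr 1
  ext x
  fin_cases x <;>
    simp [E, Finsupp.single_apply, mul_comm]

lemma E_inj (hq : 2 ≤ q) {i j k l α β i' j' k' l' α' β' : ℕ}
    (hβ : β < q-1) (hβ' : β' < q-1) (hα : α < q-1) (hα' : α' < q-1)
    (h : E q ((q-1)*i+β) j ((q-1)*k+α) l = E q ((q-1)*i'+β') j' ((q-1)*k'+α') l') :
    i = i' ∧ j = j' ∧ k = k' ∧ l = l' ∧ α = α' ∧ β = β' := by
  have h0 := DFunLike.congr_fun h (0 : Fin 4)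
  have h1 := DFunLike.congr_fun h (1 : Fin 4)
  have h2 := DFunLike.congr_fun h (2 : Fin 4)
  have h3 := DFunLike.congr_fun h (3 : Fin 4)
  simp [E, Finsupp.single_apply] at h0 h1 h2 h3
  -- h1 : (q-1)*i+β = (q-1)*i'+β', etc.
  have hβeq : β = β' := by
    have e1 : ((q-1)*i+β) % (q-1) = ((q-1)*i'+β') % (q-1) := by rw [h1]
    rwa [Nat.mul_add_mod, Nat.mul_add_mod, Nat.mod_eq_of_lt hβ, Nat.mod_eq_of_lt hβ'] at e1
  have hieq : i = i' := by
    apply Nat.eq_of_mul_eq_mul_left (show 0 < q-1 by omega)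
    omega
  have hαeq : α = α' := by
    have e1 : ((q-1)*k+α) % (q-1) = ((q-1)*k'+α') % (q-1) := by rw [h3]
    rwa [Nat.mul_add_mod, Nat.mul_add_mod, Nat.mod_eq_of_lt hα, Nat.mod_eq_of_lt hα'] at e1
  have hkeq : k = k' := by
    apply Nat.eq_of_mul_eq_mul_left (show 0 < q-1 by omega)
    omega
  have hjeq : j = j' := by
    rw [← h1] at h0
    have := Nat.add_left_cancel h0
    exact Nat.eq_of_mul_eq_mul_right (q2_sub_pos q hq) this
  have hleq : l = l' := by
    rw [← h3] at h2
    have := Nat.add_left_cancel h2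
    exact Nat.eq_of_mul_eq_mul_right (q2_sub_pos q hq) this
  exact ⟨hieq, hjeq, hkeq, hleq, hαeq, hβeq⟩

lemma closure_decomp {c21 c21s : MvPolynomial (Fin 4) F} (x : MvPolynomial (Fin 4) F)
    (hx : x ∈ Submonoid.closure {d22 F q ^ (q-1), c21, d22s F q ^ (q-1), c21s}) :
    ∃ i j k l, x = d22 F q ^ ((q-1)*i) * c21 ^ j * d22s F q ^ ((q-1)*k) * c21s ^ l := by
  induction hx using Submonoid.closure_induction with
  | mem y hy =>
    rcases hy with rfl | rfl | rfl | rfl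
    · exact ⟨1, 0, 0, 0, by simp⟩
    · exact ⟨0, 1, 0, 0, by simp⟩
    · exact ⟨0, 0, 1, 0, by simp⟩
    · exact ⟨0, 0, 0, 1, by simp⟩
  | one => exact ⟨0, 0, 0, 0, by simp⟩
  | mul y z hy hz ihy ihz =>
    obtain ⟨i₁, j₁, k₁, l₁, rfl⟩ := ihy
    obtain ⟨i₂, j₂, k₂, l₂, rfl⟩ := ihz
    refine ⟨i₁+i₂, j₁+j₂, k₁+k₂, l₁+l₂, ?_⟩
    rw [Nat.mul_add, Nat.mul_add, pow_add, pow_add, pow_add, pow_add]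
    ring



lemma sd_smul {a : F} (ha : a ≠ 0) {p : MvPolynomial (Fin 4) F} (hp : p ≠ 0) :
    sd (a • p) = sd p := by
  have hCa : (C a : MvPolynomial (Fin 4) F) ≠ 0 := by simpa using ha
  rw [MvPolynomial.smul_eq_C_mul, sd_mul hCa hp,
    show sd (C a : MvPolynomial (Fin 4) F) = 0 from supDegree_toLex_C a, zero_add]

end Stmt14

/-- `𝒜 = F_q[d₂₂, c₂₁, d₂₂*, c₂₁*]` is a free module over
`ℬ = F_q[d₂₂^{q−1}, c₂₁, (d₂₂*)^{q−1}, c₂₁*]` with basis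
`{(d₂₂*)^α d₂₂^β : 0 ≤ α, β ≤ q−2}`. -/
theorem stmt_14 (q : ℕ) (hq : IsPrimePow q) (F : Type) [Field F] [Fintype F]
    (hF : Fintype.card F = q)
    (c21 c21s : R2 F)
    (hc21 : d22 F q * c21 = X 1 * X 0 ^ (q ^ 2) - X 0 * X 1 ^ (q ^ 2))
    (hc21s : d22s F q * c21s = X 2 * X 3 ^ (q ^ 2) - X 3 * X 2 ^ (q ^ 2))
    (T : Set (R2 F))
    (hT : T = {f | ∃ α β, α ≤ q - 2 ∧ β ≤ q - 2 ∧ f = d22s F q ^ α * d22 F q ^ β}) :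
    T ⊆ (Algebra.adjoin F {d22 F q, c21, d22s F q, c21s} : Subalgebra F (R2 F)) ∧
    (∀ f ∈ (Algebra.adjoin F {d22 F q, c21, d22s F q, c21s} : Subalgebra F (R2 F)),
      f ∈ Submodule.span
        (Algebra.adjoin F {d22 F q ^ (q - 1), c21, d22s F q ^ (q - 1), c21s}) T) ∧
    LinearIndependent (Algebra.adjoin F {d22 F q ^ (q - 1), c21, d22s F q ^ (q - 1), c21s})
      (fun b : T => (b : R2 F)) := by
  classical
  have hq2 : 2 ≤ q := hq.two_le
  -- the coefficient algebra
  set B : Subalgebra F (R2 F) :=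
    Algebra.adjoin F {d22 F q ^ (q - 1), c21, d22s F q ^ (q - 1), c21s} with hBdef
  -- 1 ∈ T
  have honeT : (1 : R2 F) ∈ T := by
    rw [hT]; exact ⟨0, 0, by omega, by omega, by simp⟩
  -- key spanning lemma
  have hkey : ∀ a b : ℕ, d22s F q ^ a * d22 F q ^ b ∈ Submodule.span B T := by
    intro a b
    have hq1 : 0 < q - 1 := by omega
    have h1 : a % (q-1) ≤ q-2 := by have := Nat.mod_lt a hq1; omega
    have h2 : b % (q-1) ≤ q-2 := by have := Nat.mod_lt b hq1; omega
    have hmemT : d22s F q ^ (a % (q-1)) * d22 F q ^ (b % (q-1)) ∈ T := by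
      rw [hT]; exact ⟨_, _, h1, h2, rfl⟩
    have hscal : (d22s F q ^ (q-1)) ^ (a/(q-1)) * (d22 F q ^ (q-1)) ^ (b/(q-1)) ∈ B :=
      mul_mem (pow_mem (Algebra.subset_adjoin (by simp)) _)
        (pow_mem (Algebra.subset_adjoin (by simp)) _)
    have heq : d22s F q ^ a * d22 F q ^ b
        = (⟨_, hscal⟩ : B) • (d22s F q ^ (a % (q-1)) * d22 F q ^ (b % (q-1))) := by
      rw [Subalgebra.smul_def, smul_eq_mul]
      show _ = (d22s F q ^ (q-1)) ^ (a/(q-1)) * (d22 F q ^ (q-1)) ^ (b/(q-1)) * _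
      rw [← pow_mul, ← pow_mul, mul_mul_mul_comm, ← pow_add, ← pow_add,
        Nat.div_add_mod, Nat.div_add_mod]
    rw [heq]
    exact Submodule.smul_mem _ _ (Submodule.subset_span hmemT)
  have honeSpan : (1 : R2 F) ∈ Submodule.span B T := Submodule.subset_span honeT
  -- multiplication stability of the span
  have hTy : ∀ t ∈ T, ∀ y ∈ Submodule.span B T, t * y ∈ Submodule.span B T := by
    intro t ht y hy
    induction hy using Submodule.span_induction with
    | mem z hz =>
      rw [hT] at ht hz
      obtain ⟨α₁, β₁, -, -, rfl⟩ := ht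
      obtain ⟨α₂, β₂, -, -, rfl⟩ := hz
      have : (d22s F q ^ α₁ * d22 F q ^ β₁) * (d22s F q ^ α₂ * d22 F q ^ β₂)
          = d22s F q ^ (α₁+α₂) * d22 F q ^ (β₁+β₂) := by
        rw [pow_add, pow_add]; ring
      rw [this]; exact hkey _ _
    | zero => rw [mul_zero]; exact zero_mem _
    | add u v hu hv ihu ihv => rw [mul_add]; exact add_mem ihu ihv
    | smul r z hz ih =>
      rw [mul_smul_comm]; exact Submodule.smul_mem _ _ ih
  have hmulSpan : ∀ x ∈ Submodule.span B T, ∀ y ∈ Submodule.span B T,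
      x * y ∈ Submodule.span B T := by
    intro x hx y hy
    induction hx using Submodule.span_induction with
    | mem z hz => exact hTy z hz y hy
    | zero => rw [zero_mul]; exact zero_mem _
    | add u v hu hv ihu ihv => rw [add_mul]; exact add_mem ihu ihv
    | smul r z hz ih => rw [smul_mul_assoc]; exact Submodule.smul_mem _ _ ih
  refine ⟨?_, ?_, ?_⟩
  · -- Part 1 : T ⊆ 𝒜
    intro f hf
    rw [hT] at hf
    obtain ⟨α, β, -, -, rfl⟩ := hf
    exact mul_mem (pow_mem (Algebra.subset_adjoin (by simp)) _)
      (pow_mem (Algebra.subset_adjoin (by simp)) _)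
  · -- Part 2 : spanning
    intro f hf
    induction hf using Algebra.adjoin_induction with
    | mem x hx =>
      rcases hx with h | h | h | h
      · rw [h]; simpa using hkey 0 1
      · rw [h]
        have hcB : c21 ∈ B := Algebra.subset_adjoin (by simp)
        have heq1 : c21 = (⟨c21, hcB⟩ : B) • (1 : R2 F) := by
          rw [Subalgebra.smul_def, smul_eq_mul, mul_one]
        rw [heq1]; exact Submodule.smul_mem _ _ honeSpan
      · rw [h]; simpa using hkey 1 0
      · rw [h]
        have hcB : c21s ∈ B := Algebra.subset_adjoin (by simp)
        have heq1 : c21s = (⟨c21s, hcB⟩ : B) • (1 : R2 F) := by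
          rw [Subalgebra.smul_def, smul_eq_mul, mul_one]
        rw [heq1]; exact Submodule.smul_mem _ _ honeSpan
    | algebraMap r =>
      have : algebraMap F (R2 F) r
          = (⟨algebraMap F (R2 F) r, Subalgebra.algebraMap_mem B r⟩ : B) • (1 : R2 F) := by
        rw [Subalgebra.smul_def, smul_eq_mul, mul_one]
      rw [this]; exact Submodule.smul_mem _ _ honeSpan
    | add u v hu hv ihu ihv => exact add_mem ihu ihv
    | mul u v hu hv ihu ihv => exact hmulSpan u ihu v ihv
  · -- Part 3 : linear independence
    rw [linearIndependent_iff]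
    intro l hl
    by_contra hl0
    -- decompositions of elements of T
    have hTdec' : ∀ y ∈ T, ∃ p : ℕ × ℕ, p.1 ≤ q-2 ∧ p.2 ≤ q-2 ∧
        y = d22s F q ^ p.1 * d22 F q ^ p.2 := by
      intro y hy
      rw [hT] at hy
      obtain ⟨α, β, h1, h2, h3⟩ := hy
      exact ⟨(α, β), h1, h2, h3⟩
    have hTdec : ∀ t : T, ∃ p : ℕ × ℕ, p.1 ≤ q-2 ∧ p.2 ≤ q-2 ∧
        (t : R2 F) = d22s F q ^ p.1 * d22 F q ^ p.2 := fun t => hTdec' t t.2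
    choose tp htp1 htp2 htp3 using hTdec
    -- coefficients as F-combinations of monomials in the generators
    have hcoef : ∀ t : T, ∃ cc : R2 F →₀ F,
        ↑cc.support ⊆ ((Submonoid.closure {d22 F q ^ (q - 1), c21, d22s F q ^ (q - 1), c21s} :
            Submonoid (R2 F)) : Set (R2 F)) ∧
          (cc.sum fun mi r => r • mi) = ((l t : R2 F)) := by
      intro t
      refine Submodule.mem_span_set.mp ?_
      rw [← Algebra.adjoin_eq_span]
      exact (Subalgebra.mem_toSubmodule _).mpr (l t).2
    choose cc hccS hccsum using hcoef
    set Bf : Finset ((_ : T) × R2 F) := l.support.sigma (fun t => (cc t).support) with hBf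
    set f : ((_ : T) × R2 F) → R2 F := fun p => cc p.1 p.2 • (p.2 * (p.1 : R2 F)) with hf
    -- the total sum vanishes
    have hsum0 : ∑ p ∈ Bf, f p = 0 := by
      rw [hBf, Finset.sum_sigma]
      have hstep : ∀ t ∈ l.support,
          ∑ x ∈ (cc t).support, f ⟨t, x⟩ = (l t : R2 F) * (t : R2 F) := by
        intro t _
        rw [← hccsum t, Finsupp.sum, Finset.sum_mul]
        exact Finset.sum_congr rfl (fun x _ => (smul_mul_assoc _ _ _).symm)
      rw [Finset.sum_congr rfl hstep]
      rw [Finsupp.linearCombination_apply, Finsupp.sum] at hl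
      calc ∑ t ∈ l.support, (l t : R2 F) * (t : R2 F)
          = ∑ t ∈ l.support, l t • (t : R2 F) := by
            refine Finset.sum_congr rfl (fun t _ => ?_)
            rw [Subalgebra.smul_def, smul_eq_mul]
        _ = 0 := hl
    -- every term of the sum is nonzero if present
    have hfne : ∀ p ∈ Bf, f p ≠ 0 := by
      rintro ⟨t, x⟩ hp
      rw [hBf, Finset.mem_sigma] at hp
      obtain ⟨ht, hx⟩ := hp
      obtain ⟨i, j, k, m, hxd⟩ := Stmt14.closure_decomp x (hccS t hx)
      have hx0 : x ≠ 0 := by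
        rw [hxd]; exact (Stmt14.sdP hq2 hc21 hc21s _ _ _ _).1
      have ht0 : (t : R2 F) ≠ 0 := by
        rw [htp3 t]
        exact mul_ne_zero (pow_ne_zero _ (Stmt14.d22s_ne hq2))
          (pow_ne_zero _ (Stmt14.d22_ne hq2))
      exact smul_ne_zero (Finsupp.mem_support_iff.mp hx) (mul_ne_zero hx0 ht0)
    -- distinct sup-degrees
    have hinj : Set.InjOn (AddMonoidAlgebra.supDegree toLex ∘ f) ↑Bf := by
      rintro ⟨t, x⟩ hp ⟨t', x'⟩ hp' hEq
      rw [Finset.mem_coe, hBf, Finset.mem_sigma] at hp hp'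
      obtain ⟨ht, hx⟩ := hp
      obtain ⟨ht', hx'⟩ := hp'
      obtain ⟨i, j, k, m, hxd⟩ := Stmt14.closure_decomp x (hccS t hx)
      obtain ⟨i', j', k', m', hxd'⟩ := Stmt14.closure_decomp x' (hccS t' hx')
      have hprod : x * (t : R2 F)
          = d22 F q ^ ((q-1)*i + (tp t).2) * c21 ^ j
              * d22s F q ^ ((q-1)*k + (tp t).1) * c21s ^ m := by
        rw [hxd, htp3 t, pow_add, pow_add]; ring
      have hprod' : x' * (t' : R2 F)
          = d22 F q ^ ((q-1)*i' + (tp t').2) * c21 ^ j'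
              * d22s F q ^ ((q-1)*k' + (tp t').1) * c21s ^ m' := by
        rw [hxd', htp3 t', pow_add, pow_add]; ring
      have hsd : Stmt14.sd (f ⟨t, x⟩)
          = toLex (Stmt14.E q ((q-1)*i + (tp t).2) j ((q-1)*k + (tp t).1) m) := by
        rw [hf]
        dsimp only
        rw [Stmt14.sd_smul (Finsupp.mem_support_iff.mp hx)
          (by rw [hprod]; exact (Stmt14.sdP hq2 hc21 hc21s _ _ _ _).1), hprod]
        exact (Stmt14.sdP hq2 hc21 hc21s _ _ _ _).2
      have hsd' : Stmt14.sd (f ⟨t', x'⟩)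
          = toLex (Stmt14.E q ((q-1)*i' + (tp t').2) j' ((q-1)*k' + (tp t').1) m') := by
        rw [hf]
        dsimp only
        rw [Stmt14.sd_smul (Finsupp.mem_support_iff.mp hx')
          (by rw [hprod']; exact (Stmt14.sdP hq2 hc21 hc21s _ _ _ _).1), hprod']
        exact (Stmt14.sdP hq2 hc21 hc21s _ _ _ _).2
      have hEE : Stmt14.E q ((q-1)*i + (tp t).2) j ((q-1)*k + (tp t).1) m
          = Stmt14.E q ((q-1)*i' + (tp t').2) j' ((q-1)*k' + (tp t').1) m' := by
        apply toLex.injective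
        rw [← hsd, ← hsd']
        exact hEq
      obtain ⟨hii, hjj, hkk, hmm, hαα, hββ⟩ := Stmt14.E_inj hq2
        (by have := htp2 t; omega) (by have := htp2 t'; omega)
        (by have := htp1 t; omega) (by have := htp1 t'; omega) hEE
      have htt : t = t' := by
        apply Subtype.ext
        rw [htp3 t, htp3 t', hαα, hββ]
      have hxx : x = x' := by
        rw [hxd, hxd', hii, hjj, hkk, hmm]
      subst htt
      subst hxx
      rfl
    -- nonempty contribution
    have hexists : ∃ p ∈ Bf, f p ≠ 0 := by
      have hlsupp : l.support.Nonempty := Finsupp.support_nonempty_iff.mpr hl0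
      obtain ⟨t0, ht0⟩ := hlsupp
      have hlt0 : (l t0 : R2 F) ≠ 0 := by
        intro h
        exact Finsupp.mem_support_iff.mp ht0 (Subtype.ext h)
      have hcc0 : (cc t0).support.Nonempty := by
        rw [Finsupp.support_nonempty_iff]
        intro h
        apply hlt0
        rw [← hccsum t0, h, Finsupp.sum_zero_index]
      obtain ⟨x0, hx0⟩ := hcc0
      refine ⟨⟨t0, x0⟩, ?_, ?_⟩
      · rw [hBf, Finset.mem_sigma]; exact ⟨ht0, hx0⟩
      · exact hfne ⟨t0, x0⟩ (by rw [hBf, Finset.mem_sigma]; exact ⟨ht0, hx0⟩)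
    exact AddMonoidAlgebra.sum_ne_zero_of_injOn_supDegree' hexists hinj hsum0
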